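/- arXiv:math/0605381 — 6 statements merged into one kernel-verified Lean document; each statement's English description precedes it below -/
import Mathlib

section
/- Let R be a commutative ring with unit, V an R-module, r ≥ 1, and let T₁, …, T_r be R-linear automorphisms of V; set T_{r+1} := (T₁⋯T_r)^{−1}. Let F be the free group on generators g₁, …, g_r and let ρ : F → GL(V) be the homomorphism with ρ(g_i) = T_i, where GL(V) acts on V on the right and a 1-cocycle is a map δ : F → V with δ(αβ) = δ(α)ρ(β) + δ(β). Define H_T := { (v₁,…,v_{r+1}) ∈ V^{r+1} : v₁(T₂⋯T_{r+1}) + v₂(T₃⋯T_{r+1}) + ⋯ + v_r T_{r+1} + v_{r+1} = 0 } and E_T := { (v(T₁−1), …, v(T_{r+1}−1)) : v ∈ V }. Then E_T ⊆ H_T, and the map sending a 1-cocycle δ to the tuple (δ(g₁), …, δ(g_r), δ((g₁⋯g_r)^{−1})) induces an R-module isomorphism from the first group cohomology H¹(F, V) (1-cocycles modulo 1-coboundaries) onto H_T/E_T. -/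
/-- The tuple `(g₁, …, g_r, (g₁⋯g_r)⁻¹)` of elements of the free group on `r` generators:
for `i < r` this is the `i`-th generator, and the last entry is the inverse of the product
of all generators. -/
noncomputable def convGens (r : ℕ) : Fin (r + 1) → FreeGroup (Fin r) :=
  fun i => if h : (i : ℕ) < r then FreeGroup.of ⟨i, h⟩
    else ((List.ofFn fun j : Fin r => FreeGroup.of j).prod)⁻¹

/-- The partial product `g₁⋯g_i` (for `i = r + 1` this is the full product times the
inverse of the full product, i.e. `1`). -/
noncomputable def convPre (r : ℕ) (i : Fin (r + 1)) : FreeGroup (Fin r) :=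
  ((List.ofFn (convGens r)).take ((i : ℕ) + 1)).prod

lemma convGens_castSucc (r : ℕ) (j : Fin r) : convGens r j.castSucc = FreeGroup.of j := by
  simp [convGens]

lemma convGens_last (r : ℕ) :
    convGens r (Fin.last r) = ((List.ofFn fun j : Fin r => FreeGroup.of j).prod)⁻¹ := by
  simp [convGens]

lemma convList_prod (r : ℕ) : (List.ofFn (convGens r)).prod = 1 := by
  rw [List.ofFn_succ' (convGens r), List.prod_concat]
  have h1 : (List.ofFn fun i : Fin r => convGens r i.castSucc)
      = List.ofFn fun i : Fin r => FreeGroup.of i := by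
    congr 1
    funext i
    exact convGens_castSucc r i
  rw [h1, convGens_last, mul_inv_cancel]

lemma convPre_last (r : ℕ) : convPre r (Fin.last r) = 1 := by
  rw [convPre, List.take_of_length_le (by simp), convList_prod]

section CocycleAux

set_option linter.unusedSectionVars false
variable {R : Type} [CommRing R] {V : Type} [AddCommGroup V] [Module R V] {r : ℕ}
  (ρ : FreeGroup (Fin r) → (V →ₗ[R] V))
  (hρmul : ∀ a b, ρ (a * b) = (ρ b).comp (ρ a))
  (hρone : ρ 1 = LinearMap.id)

include hρmul hρone

lemma rho_inv_rho (a : FreeGroup (Fin r)) (x : V) : ρ a⁻¹ (ρ a x) = x := by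
  have h := hρmul a a⁻¹
  rw [mul_inv_cancel, hρone] at h
  simpa using (LinearMap.congr_fun h.symm x)

lemma rho_rho_inv (a : FreeGroup (Fin r)) (x : V) : ρ a (ρ a⁻¹ x) = x := by
  have h := hρmul a⁻¹ a
  rw [inv_mul_cancel, hρone] at h
  simpa using (LinearMap.congr_fun h.symm x)

variable {δ : FreeGroup (Fin r) → V} (hδ : ∀ a b, δ (a * b) = ρ b (δ a) + δ b)

include hδ

lemma cocycle_one : δ 1 = 0 := by
  have h := hδ 1 1
  rw [one_mul, hρone] at h
  simp only [LinearMap.id_apply] at h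
  exact (right_eq_add.mp h)

lemma cocycle_inv (a : FreeGroup (Fin r)) : δ a⁻¹ = - ρ a⁻¹ (δ a) := by
  have h := hδ a a⁻¹
  rw [mul_inv_cancel, cocycle_one ρ hρmul hρone hδ] at h
  exact eq_neg_of_add_eq_zero_right h.symm

lemma keySum : ∀ (n : ℕ) (f : Fin n → FreeGroup (Fin r)),
    ∑ i : Fin n, ρ (((List.ofFn f).take ((i : ℕ) + 1)).prod)⁻¹ (δ (f i))
      = ρ ((List.ofFn f).prod)⁻¹ (δ ((List.ofFn f).prod)) := by
  intro n
  induction n with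
  | zero =>
    intro f
    simp [cocycle_one ρ hρmul hρone hδ, hρone]
  | succ n ih =>
    intro f
    rw [List.ofFn_succ, Fin.sum_univ_succ]
    have hterm : ∀ i : Fin n,
        ρ (((f 0 :: List.ofFn fun i => f i.succ).take ((i.succ : ℕ) + 1)).prod)⁻¹ (δ (f i.succ))
          = ρ (f 0)⁻¹ (ρ (((List.ofFn fun i => f i.succ).take ((i : ℕ) + 1)).prod)⁻¹
              (δ ((fun i => f i.succ) i))) := by
      intro i
      have : ((i.succ : ℕ) + 1) = (i : ℕ) + 1 + 1 := rfl
      rw [this, List.take_succ_cons, List.prod_cons, mul_inv_rev, hρmul]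
      rfl
    rw [Finset.sum_congr rfl (fun i _ => hterm i), ← map_sum, ih (fun i => f i.succ)]
    rw [List.prod_cons, mul_inv_rev, hρmul]
    simp only [LinearMap.comp_apply]
    rw [hδ]
    simp only [map_add]
    rw [rho_inv_rho ρ hρmul hρone]
    simp only [List.take_succ_cons, List.take_zero, List.prod_cons, List.prod_nil, mul_one,
      Fin.val_zero, zero_add]

lemma cocycle_ext {δ₂ : FreeGroup (Fin r) → V} (hδ₂ : ∀ a b, δ₂ (a * b) = ρ b (δ₂ a) + δ₂ b)
    (hgen : ∀ j : Fin r, δ (FreeGroup.of j) = δ₂ (FreeGroup.of j)) :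
    ∀ γ, δ γ = δ₂ γ := by
  intro γ
  refine FreeGroup.induction_on γ ?_ ?_ ?_ ?_
  · rw [cocycle_one ρ hρmul hρone hδ, cocycle_one ρ hρmul hρone hδ₂]
  · exact hgen
  · intro j h
    rw [cocycle_inv ρ hρmul hρone hδ, cocycle_inv ρ hρmul hρone hδ₂, h]
  · intro x y hx hy
    rw [hδ, hδ₂, hx, hy]

omit hδ

lemma exists_cocycle (w : Fin r → V) :
    ∃ δ : FreeGroup (Fin r) → V, (∀ a b, δ (a * b) = ρ b (δ a) + δ b) ∧
      ∀ j : Fin r, δ (FreeGroup.of j) = w j := by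
  letI : Group (V × FreeGroup (Fin r)) :=
    { mul := fun p q => (ρ q.2 p.1 + q.1, p.2 * q.2)
      one := (0, 1)
      inv := fun p => (-(ρ p.2⁻¹ p.1), p.2⁻¹)
      mul_assoc := by
        rintro ⟨x, a⟩ ⟨y, b⟩ ⟨z, c⟩
        show ((ρ c (ρ b x + y) + z, a * b * c) : V × _) = (ρ (b * c) x + (ρ c y + z), a * (b * c))
        rw [hρmul b c]
        simp [mul_assoc, add_assoc]
      one_mul := by
        rintro ⟨x, a⟩
        show ((ρ a 0 + x, 1 * a) : V × _) = (x, a)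
        simp
      mul_one := by
        rintro ⟨x, a⟩
        show ((ρ 1 x + 0, a * 1) : V × _) = (x, a)
        simp [hρone]
      inv_mul_cancel := by
        rintro ⟨x, a⟩
        show ((ρ a (-(ρ a⁻¹ x)) + x, a⁻¹ * a) : V × _) = (0, 1)
        rw [map_neg, rho_rho_inv ρ hρmul hρone]
        simp }
  let f : FreeGroup (Fin r) →* (V × FreeGroup (Fin r)) :=
    FreeGroup.lift (fun j => (w j, FreeGroup.of j))
  let π : (V × FreeGroup (Fin r)) →* FreeGroup (Fin r) :=
    { toFun := Prod.snd, map_one' := rfl, map_mul' := fun _ _ => rfl }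
  have hsnd : ∀ γ, (f γ).2 = γ := by
    have h : π.comp f = MonoidHom.id _ := FreeGroup.ext_hom _ _ (by
      intro a
      simp [π, f])
    intro γ
    exact DFunLike.congr_fun h γ
  refine ⟨fun γ => (f γ).1, ?_, ?_⟩
  · intro a b
    show (f (a * b)).1 = ρ b (f a).1 + (f b).1
    have h1 : (f (a * b)).1 = ρ (f b).2 (f a).1 + (f b).1 := by rw [map_mul f a b]; rfl
    rw [h1, hsnd b]
  · intro j
    simp [f]

end CocycleAux

/-- Right action via an anti-homomorphism `ρ` of the free group `F` on
`r` generators into `End_R(V)` sending the generators to automorphisms `T₁, …, T_r`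
(so that `ρ((g₁⋯g_r)⁻¹)` realizes `T_{r+1} := (T₁⋯T_r)⁻¹`).  With
`H_T = {(v₁,…,v_{r+1}) : Σᵢ vᵢ(T_{i+1}⋯T_{r+1}) = 0}` (here `vᵢ(T_{i+1}⋯T_{r+1}) =
ρ((g₁⋯g_i)⁻¹) vᵢ`) and `E_T = {(v(T₁−1),…,v(T_{r+1}−1)) : v ∈ V}`, the evaluation map
`δ ↦ (δ(g₁),…,δ(g_r),δ((g₁⋯g_r)⁻¹))` sends 1-cocycles into `H_T`, contains `E_T ⊆ H_T`,
hits `E_T` exactly on 1-coboundaries, and is onto `H_T`; hence it induces an `R`-module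
isomorphism `H¹(F,V) ≅ H_T/E_T`. -/
theorem cocycle_evaluation_iso
    (R : Type) [CommRing R] (V : Type) [AddCommGroup V] [Module R V]
    (r : ℕ) (hr : 1 ≤ r)
    (T : Fin r → (V ≃ₗ[R] V))
    (ρ : FreeGroup (Fin r) → (V →ₗ[R] V))
    (hρmul : ∀ a b, ρ (a * b) = (ρ b).comp (ρ a))
    (hρone : ρ 1 = LinearMap.id)
    (hρgen : ∀ i : Fin r, ρ (FreeGroup.of i) = (T i : V →ₗ[R] V)) :
    -- E_T ⊆ H_T
    (∀ u : V, ∑ i : Fin (r + 1),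
        ρ (convPre r i)⁻¹ (ρ (convGens r i) u - u) = 0) ∧
    -- evaluation of a 1-cocycle lies in H_T
    (∀ δ : FreeGroup (Fin r) → V, (∀ a b, δ (a * b) = ρ b (δ a) + δ b) →
      ∑ i : Fin (r + 1), ρ (convPre r i)⁻¹ (δ (convGens r i)) = 0) ∧
    -- a 1-cocycle evaluates into E_T iff it is a 1-coboundary
    (∀ δ : FreeGroup (Fin r) → V, (∀ a b, δ (a * b) = ρ b (δ a) + δ b) →
      ((∃ u : V, ∀ i : Fin (r + 1), δ (convGens r i) = ρ (convGens r i) u - u) ↔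
        ∃ v : V, ∀ γ, δ γ = v - ρ γ v)) ∧
    -- every element of H_T is the evaluation of some 1-cocycle
    (∀ v : Fin (r + 1) → V,
      (∑ i : Fin (r + 1), ρ (convPre r i)⁻¹ (v i) = 0) →
      ∃ δ : FreeGroup (Fin r) → V, (∀ a b, δ (a * b) = ρ b (δ a) + δ b) ∧
        ∀ i : Fin (r + 1), δ (convGens r i) = v i) := by
  -- part 2 first
  have part2 : ∀ δ : FreeGroup (Fin r) → V, (∀ a b, δ (a * b) = ρ b (δ a) + δ b) →
      ∑ i : Fin (r + 1), ρ (convPre r i)⁻¹ (δ (convGens r i)) = 0 := by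
    intro δ hδ
    have key := keySum ρ hρmul hρone hδ (r + 1) (convGens r)
    rw [convList_prod, inv_one, hρone] at key
    simp only [LinearMap.id_apply] at key
    rw [cocycle_one ρ hρmul hρone hδ] at key
    simp only [convPre]
    exact key
  have hcobcoc : ∀ u : V, ∀ a b : FreeGroup (Fin r),
      (ρ (a * b) u - u) = ρ b (ρ a u - u) + (ρ b u - u) := by
    intro u a b
    rw [hρmul]
    simp only [LinearMap.comp_apply, map_sub]
    abel
  refine ⟨?_, part2, ?_, ?_⟩
  · intro u
    exact part2 (fun γ => ρ γ u - u) (hcobcoc u)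
  · intro δ hδ
    constructor
    · rintro ⟨u, hu⟩
      refine ⟨-u, ?_⟩
      have hext := cocycle_ext ρ hρmul hρone hδ (δ₂ := fun γ => ρ γ u - u)
        (fun a b => hcobcoc u a b) (fun j => by
        have := hu j.castSucc
        rwa [convGens_castSucc] at this)
      intro γ
      rw [hext γ, map_neg]
      abel
    · rintro ⟨v, hv⟩
      refine ⟨-v, fun i => ?_⟩
      rw [hv, map_neg]
      abel
  · intro v hv
    obtain ⟨δ, hδ, hw⟩ := exists_cocycle ρ hρmul hρone (fun j => v j.castSucc)
    refine ⟨δ, hδ, ?_⟩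
    have hgen : ∀ j : Fin r, δ (convGens r j.castSucc) = v j.castSucc := fun j => by
      rw [convGens_castSucc]; exact hw j
    have hsum := part2 δ hδ
    rw [Fin.sum_univ_castSucc] at hsum hv
    have hAB : ∑ i : Fin r, ρ (convPre r i.castSucc)⁻¹ (δ (convGens r i.castSucc))
        = ∑ i : Fin r, ρ (convPre r i.castSucc)⁻¹ (v i.castSucc) :=
      Finset.sum_congr rfl (fun i _ => by rw [hgen])
    rw [hAB] at hsum
    have hlasteq : ρ (convPre r (Fin.last r))⁻¹ (δ (convGens r (Fin.last r)))
        = ρ (convPre r (Fin.last r))⁻¹ (v (Fin.last r)) := by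
      have := hsum.trans hv.symm
      exact add_left_cancel this
    rw [convPre_last, inv_one, hρone] at hlasteq
    simp only [LinearMap.id_apply] at hlasteq
    intro i
    by_cases h : (i : ℕ) < r
    · have hi : i = Fin.castSucc ⟨(i : ℕ), h⟩ := by
        ext; simp
      rw [hi]
      exact hgen ⟨(i : ℕ), h⟩
    · have hi : i = Fin.last r := by
        ext
        simp only [Fin.val_last]
        omega
      rw [hi]
      exact hlasteq
end

section
/- Let K be a field, V a finite-dimensional K-vector space, and p, q ≥ 1. Let A₁, …, A_p ∈ GL(V) (acting on V on the right) be such that the only vector v ∈ V with v·A_i = v for all i = 1, …, p is v = 0, and let λ₁, …, λ_q ∈ K with each λ_j ≠ 0 and λ_j ≠ 1. Let F be the free group on generators α₁, …, α_{p+q} and let ρ : F → GL(V) be the homomorphism with ρ(α_i) = A_i for 1 ≤ i ≤ p and ρ(α_{p+j}) = λ_j·id_V for 1 ≤ j ≤ q. Then a 1-cocycle δ : F → V (i.e. δ(αβ) = δ(α)ρ(β) + δ(β)) satisfies δ([α_i, α_{p+j}]) = 0 for all 1 ≤ i ≤ p and 1 ≤ j ≤ q if and only if δ is a 1-coboundary,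 i.e. there exists v ∈ V with δ(γ) = v(1 − ρ(γ)) for all γ ∈ F. -/
/-- With `F` the free group on generators `α₁,…,α_p,α_{p+1},…,α_{p+q}`
(indexed by `Fin p ⊕ Fin q`), the right action `ρ` given by an anti-homomorphism sending
`α_i ↦ A_i` (no common fixed vector) and `α_{p+j} ↦ λ_j · id` with `λ_j ≠ 0, 1`:
a 1-cocycle `δ` vanishes on all commutators `[α_i, α_{p+j}] = α_i⁻¹α_{p+j}⁻¹α_iα_{p+j}`
iff it is a 1-coboundary. -/
theorem cocycle_vanishing_on_commutators_iff_coboundary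
    (K : Type) [Field K] (V : Type) [AddCommGroup V] [Module K V] [FiniteDimensional K V]
    (p q : ℕ) (hp : 1 ≤ p) (hq : 1 ≤ q)
    (A : Fin p → (V ≃ₗ[K] V))
    (hA : ∀ v : V, (∀ i : Fin p, A i v = v) → v = 0)
    (lam : Fin q → K) (hlam0 : ∀ j, lam j ≠ 0) (hlam1 : ∀ j, lam j ≠ 1)
    (ρ : FreeGroup (Fin p ⊕ Fin q) → (V →ₗ[K] V))
    (hρmul : ∀ a b, ρ (a * b) = (ρ b).comp (ρ a))
    (hρone : ρ 1 = LinearMap.id)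
    (hρA : ∀ i : Fin p, ρ (FreeGroup.of (Sum.inl i)) = (A i : V →ₗ[K] V))
    (hρlam : ∀ j : Fin q, ρ (FreeGroup.of (Sum.inr j)) = lam j • (LinearMap.id : V →ₗ[K] V))
    (δ : FreeGroup (Fin p ⊕ Fin q) → V)
    (hδ : ∀ a b, δ (a * b) = ρ b (δ a) + δ b) :
    (∀ (i : Fin p) (j : Fin q),
      δ ((FreeGroup.of (Sum.inl i))⁻¹ * (FreeGroup.of (Sum.inr j))⁻¹ *
          FreeGroup.of (Sum.inl i) * FreeGroup.of (Sum.inr j)) = 0) ↔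
      ∃ v : V, ∀ γ, δ γ = v - ρ γ v := by
  classical
  -- abbreviations
  set a : Fin p → FreeGroup (Fin p ⊕ Fin q) := fun i => FreeGroup.of (Sum.inl i) with ha
  set b : Fin q → FreeGroup (Fin p ⊕ Fin q) := fun j => FreeGroup.of (Sum.inr j) with hb
  -- basic facts
  have hδ1 : δ 1 = 0 := by
    have h := hδ 1 1
    rw [mul_one, hρone] at h
    simpa using h.symm
  have hρinv1 : ∀ x, (ρ x).comp (ρ x⁻¹) = LinearMap.id := by
    intro x
    rw [← hρmul, inv_mul_cancel, hρone]
  have hρinv2 : ∀ x, (ρ x⁻¹).comp (ρ x) = LinearMap.id := by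
    intro x
    rw [← hρmul, mul_inv_cancel, hρone]
  have hδinv : ∀ x, δ x⁻¹ = - ρ x⁻¹ (δ x) := by
    intro x
    have h := hδ x x⁻¹
    rw [mul_inv_cancel, hδ1] at h
    exact eq_neg_of_add_eq_zero_right h.symm
  have hρbinv : ∀ j, ρ (b j)⁻¹ = (lam j)⁻¹ • (LinearMap.id : V →ₗ[K] V) := by
    intro j
    have h := hρinv1 (b j)
    rw [hb, hρlam] at h
    have h2 : lam j • ρ (FreeGroup.of (Sum.inr j))⁻¹ = LinearMap.id := by
      rw [← h]; ext v; simp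
    calc ρ (b j)⁻¹ = (lam j)⁻¹ • (lam j • ρ (FreeGroup.of (Sum.inr j))⁻¹) := by
          rw [smul_smul, inv_mul_cancel₀ (hlam0 j), one_smul]
      _ = (lam j)⁻¹ • (LinearMap.id : V →ₗ[K] V) := by rw [h2]
  -- ρ of the commutator is the identity
  have hρc : ∀ i j, ρ ((a i)⁻¹ * (b j)⁻¹ * a i * b j) = LinearMap.id := by
    intro i j
    rw [hρmul, hρmul, hρmul, hρbinv j, hb, hρlam j]
    ext v
    have h := LinearMap.congr_fun (hρinv1 (a i)) v
    simp only [LinearMap.comp_apply, LinearMap.smul_apply, LinearMap.id_apply, map_smul] at h ⊢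
    rw [smul_smul, inv_mul_cancel₀ (hlam0 j), one_smul]
    exact h
  constructor
  · -- forward direction
    intro h
    -- key relation: λ_j • δ(a i) + δ(b j) = A i (δ(b j)) + δ(a i)
    have hkey : ∀ i j, lam j • δ (a i) + δ (b j) = A i (δ (b j)) + δ (a i) := by
      intro i j
      have hw : a i * b j = (b j * a i) * ((a i)⁻¹ * (b j)⁻¹ * a i * b j) := by group
      have h1 := hδ (b j * a i) ((a i)⁻¹ * (b j)⁻¹ * a i * b j)
      rw [← hw, hρc i j, h i j, add_zero] at h1
      have hρa : ∀ i', ρ (a i') = ((A i' : V ≃ₗ[K] V) : V →ₗ[K] V) := hρA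
      have hρb : ∀ j', ρ (b j') = lam j' • (LinearMap.id : V →ₗ[K] V) := hρlam
      have h2 := hδ (a i) (b j)
      have h3 := hδ (b j) (a i)
      rw [hρb j] at h2
      rw [hρa i] at h3
      simp only [LinearMap.smul_apply, LinearMap.id_apply] at h2
      rw [← h2, h1, h3]
      simp
    -- define v from j₀
    set j₀ : Fin q := ⟨0, hq⟩ with hj₀
    set v : V := (1 - lam j₀)⁻¹ • δ (b j₀) with hv
    have hne : (1 : K) - lam j₀ ≠ 0 := sub_ne_zero.mpr (Ne.symm (hlam1 j₀))
    have hbv : δ (b j₀) = (1 - lam j₀) • v := by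
      rw [hv, smul_smul, mul_inv_cancel₀ hne, one_smul]
    -- δ on the a-generators
    have hgen_a : ∀ i, δ (a i) = v - A i v := by
      intro i
      have h1 := hkey i j₀
      rw [hbv, map_smul] at h1
      have hne2 : lam j₀ - 1 ≠ 0 := sub_ne_zero.mpr (hlam1 j₀)
      apply smul_right_injective V hne2
      calc (lam j₀ - 1) • δ (a i)
          = (lam j₀ • δ (a i) + (1 - lam j₀) • v) - ((1 - lam j₀) • (A i) v + δ (a i))
            + ((lam j₀ - 1) • (v - A i v) - ((lam j₀ - 1) • δ (a i))) + (lam j₀ - 1) • δ (a i)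
            := by module
        _ = (lam j₀ - 1) • (v - A i v) := by rw [h1]; abel
    -- δ on the b-generators
    have hgen_b : ∀ j, δ (b j) = (1 - lam j) • v := by
      intro j
      have hfix : ∀ i, A i (δ (b j) - (1 - lam j) • v) = δ (b j) - (1 - lam j) • v := by
        intro i
        have h1 := hkey i j
        rw [hgen_a i] at h1
        have h2 : A i (δ (b j)) = (lam j • (v - A i v) + δ (b j)) - (v - A i v) :=
          eq_sub_of_add_eq h1.symm
        rw [map_sub, map_smul, h2]
        module
      exact sub_eq_zero.mp (hA _ hfix)
    refine ⟨v, fun γ => ?_⟩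
    induction γ using FreeGroup.induction_on with
    | C1 => rw [hδ1, hρone]; simp
    | of x =>
      cases x with
      | inl i =>
        have : (FreeGroup.of (Sum.inl i) : FreeGroup (Fin p ⊕ Fin q)) = a i := rfl
        rw [this, hgen_a i, ha, hρA i]
        rfl
      | inr j =>
        have : (FreeGroup.of (Sum.inr j) : FreeGroup (Fin p ⊕ Fin q)) = b j := rfl
        rw [this, hgen_b j, hb, hρlam j]
        simp only [LinearMap.smul_apply, LinearMap.id_apply, sub_smul, one_smul]
    | inv_of x ih =>
      rw [hδinv, ih, map_sub]
      have h1 := LinearMap.congr_fun (hρinv2 (FreeGroup.of x : FreeGroup (Fin p ⊕ Fin q))) v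
      simp only [LinearMap.comp_apply, LinearMap.id_apply] at h1
      rw [h1]
      abel
    | mul x y ihx ihy =>
      rw [hδ x y, ihx, ihy, hρmul, map_sub]
      simp only [LinearMap.comp_apply]
      abel
  · -- reverse direction
    rintro ⟨v, hv⟩ i j
    rw [hv, hρc i j]
    simp
end

section
/- Let K be a field, V a finite-dimensional K-vector space, p ≥ 1, A₁, …, A_p ∈ GL(V) (acting on the right), and λ ∈ K with λ ≠ 0. Let F be the free group on generators α₁, …, α_{p+1} and ρ : F → GL(V) the homomorphism with ρ(α_m) = A_m for 1 ≤ m ≤ p and ρ(α_{p+1}) = λ·id_V. Fix i with 1 ≤ i ≤ p and let σ : F → F be the group endomorphism determined by σ(α_m) = α_m for m < i, σ(α_i) = α_{p+1}^{−1}α_i α_{p+1}, σ(α_m) = [α_i,α_{p+1}]^{−1} α_m [α_i,α_{p+1}] for i < m ≤ p, and σ(α_{p+1}) = (α_i α_{p+1})^{−1} α_{p+1} (α_i α_{p+1}). Then for every 1-cocycle δ : F → V of ρ and every m with 1 ≤ m ≤ p: if m < i then δ(σ([α_m, α_{p+1}])) = δ([α_i,α_{p+1}])·λ(A_m − 1)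 + δ([α_m,α_{p+1}]); if m = i then δ(σ([α_i, α_{p+1}])) = δ([α_i,α_{p+1}])·λ A_i; and if m > i then δ(σ([α_m, α_{p+1}])) = δ([α_i,α_{p+1}])·(A_m − 1) + δ([α_m,α_{p+1}]). -/
/-- The commutator `[a, b] := a⁻¹ b⁻¹ a b`. -/
def commE {G : Type*} [Group G] (a b : G) : G := a⁻¹ * b⁻¹ * a * b

/-- Explicit braid action on evaluations of 1-cocycles: with the right
action `ρ` of the free group on `α₁,…,α_{p+1}` (generators indexed by `Fin (p+1)`,
`α_m = FreeGroup.of m.castSucc` for `m : Fin p` and `α_{p+1} = FreeGroup.of (Fin.last p)`)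
sending `α_m ↦ A_m` and `α_{p+1} ↦ λ·id`, and `σ` the endomorphism described in the
statement, every 1-cocycle `δ` satisfies the three displayed formulas. -/
theorem cocycle_braid_formulas
    (K : Type) [Field K] (V : Type) [AddCommGroup V] [Module K V] [FiniteDimensional K V]
    (p : ℕ) (hp : 1 ≤ p)
    (A : Fin p → (V ≃ₗ[K] V)) (lam : K) (hlam : lam ≠ 0)
    (ρ : FreeGroup (Fin (p + 1)) → (V →ₗ[K] V))
    (hρmul : ∀ a b, ρ (a * b) = (ρ b).comp (ρ a))
    (hρone : ρ 1 = LinearMap.id)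
    (hρA : ∀ m : Fin p, ρ (FreeGroup.of m.castSucc) = (A m : V →ₗ[K] V))
    (hρlast : ρ (FreeGroup.of (Fin.last p)) = lam • (LinearMap.id : V →ₗ[K] V))
    (i : Fin p)
    (σ : FreeGroup (Fin (p + 1)) →* FreeGroup (Fin (p + 1)))
    (hσlt : ∀ m : Fin p, m < i →
      σ (FreeGroup.of m.castSucc) = FreeGroup.of m.castSucc)
    (hσeq : σ (FreeGroup.of i.castSucc) =
      (FreeGroup.of (Fin.last p))⁻¹ * FreeGroup.of i.castSucc * FreeGroup.of (Fin.last p))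
    (hσgt : ∀ m : Fin p, i < m →
      σ (FreeGroup.of m.castSucc) =
        (commE (FreeGroup.of i.castSucc) (FreeGroup.of (Fin.last p)))⁻¹ *
          FreeGroup.of m.castSucc *
          commE (FreeGroup.of i.castSucc) (FreeGroup.of (Fin.last p)))
    (hσlast : σ (FreeGroup.of (Fin.last p)) =
      (FreeGroup.of i.castSucc * FreeGroup.of (Fin.last p))⁻¹ *
        FreeGroup.of (Fin.last p) *
        (FreeGroup.of i.castSucc * FreeGroup.of (Fin.last p)))
    (δ : FreeGroup (Fin (p + 1)) → V)
    (hδ : ∀ a b, δ (a * b) = ρ b (δ a) + δ b) :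
    ∀ m : Fin p,
      (m < i →
        δ (σ (commE (FreeGroup.of m.castSucc) (FreeGroup.of (Fin.last p)))) =
          lam • ((A m) (δ (commE (FreeGroup.of i.castSucc) (FreeGroup.of (Fin.last p)))) -
              δ (commE (FreeGroup.of i.castSucc) (FreeGroup.of (Fin.last p)))) +
            δ (commE (FreeGroup.of m.castSucc) (FreeGroup.of (Fin.last p)))) ∧
      (m = i →
        δ (σ (commE (FreeGroup.of i.castSucc) (FreeGroup.of (Fin.last p)))) =
          lam • (A i) (δ (commE (FreeGroup.of i.castSucc) (FreeGroup.of (Fin.last p))))) ∧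
      (i < m →
        δ (σ (commE (FreeGroup.of m.castSucc) (FreeGroup.of (Fin.last p)))) =
          ((A m) (δ (commE (FreeGroup.of i.castSucc) (FreeGroup.of (Fin.last p)))) -
              δ (commE (FreeGroup.of i.castSucc) (FreeGroup.of (Fin.last p)))) +
            δ (commE (FreeGroup.of m.castSucc) (FreeGroup.of (Fin.last p)))) := by

  -- pointwise versions of the representation hypotheses
  have hρmul' : ∀ a b v, ρ (a * b) v = ρ b (ρ a v) := by
    intro a b v; rw [hρmul]; rfl
  have hρid₁ : ∀ a v, ρ a (ρ a⁻¹ v) = v := by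
    intro a v
    have h := hρmul' a⁻¹ a v
    rw [inv_mul_cancel, hρone, LinearMap.id_apply] at h
    exact h.symm
  have hρid₂ : ∀ a v, ρ a⁻¹ (ρ a v) = v := by
    intro a v
    have h := hρmul' a a⁻¹ v
    rw [mul_inv_cancel, hρone, LinearMap.id_apply] at h
    exact h.symm
  have hA' : ∀ (m : Fin p) v, ρ (FreeGroup.of m.castSucc) v = A m v := by
    intro m v; rw [hρA]; rfl
  have hAinv' : ∀ (m : Fin p) v, ρ (FreeGroup.of m.castSucc)⁻¹ v = (A m).symm v := by
    intro m v
    have h := hρid₂ (FreeGroup.of m.castSucc) ((A m).symm v)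
    rwa [hA', LinearEquiv.apply_symm_apply] at h
  have hlast' : ∀ v, ρ (FreeGroup.of (Fin.last p)) v = lam • v := by
    intro v; rw [hρlast]; rfl
  have hlastinv' : ∀ v, ρ (FreeGroup.of (Fin.last p))⁻¹ v = lam⁻¹ • v := by
    intro v
    have h := hρid₂ (FreeGroup.of (Fin.last p)) (lam⁻¹ • v)
    rwa [hlast', smul_smul, mul_inv_cancel₀ hlam, one_smul] at h
  have hδ1 : δ 1 = 0 := by
    have h := hδ 1 1
    rw [one_mul, hρone, LinearMap.id_apply] at h
    exact left_eq_add.mp h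
  have hδinv : ∀ a, δ a⁻¹ = - ρ a⁻¹ (δ a) := by
    intro a
    have h := hδ a a⁻¹
    rw [mul_inv_cancel, hδ1] at h
    exact eq_neg_of_add_eq_zero_right h.symm
  intro m
  refine ⟨?_, ?_, ?_⟩
  · intro hmi
    simp only [commE, map_mul, map_inv, hσlt m hmi, hσeq, hσlast, mul_inv_rev, inv_inv,
      hδ, hδinv, hρmul', hA', hAinv', hlast', hlastinv',
      map_add, map_sub, map_neg, map_smul, smul_add, smul_sub, smul_neg, smul_smul,
      LinearEquiv.apply_symm_apply, LinearEquiv.symm_apply_apply]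
    match_scalars <;> field_simp <;> ring
  · rintro rfl
    simp only [commE, map_mul, map_inv, hσeq, hσlast, mul_inv_rev, inv_inv,
      hδ, hδinv, hρmul', hA', hAinv', hlast', hlastinv',
      map_add, map_sub, map_neg, map_smul, smul_add, smul_sub, smul_neg, smul_smul,
      LinearEquiv.apply_symm_apply, LinearEquiv.symm_apply_apply]
    match_scalars <;> field_simp <;> ring
  · intro him
    simp only [commE, map_mul, map_inv, hσgt m him, hσeq, hσlast, mul_inv_rev, inv_inv,
      hδ, hδinv, hρmul', hA', hAinv', hlast', hlastinv',
      map_add, map_sub, map_neg, map_smul, smul_add, smul_sub, smul_neg, smul_smul,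
      LinearEquiv.apply_symm_apply, LinearEquiv.symm_apply_apply]
    match_scalars <;> field_simp <;> ring
end

section
/- Let q be a prime power, n ≥ 1, and let T₁, …, T_r ∈ GL_n(F_q) be matrices generating an absolutely irreducible subgroup G of GL_n(F_q) such that the product T₁⋯T_r is a scalar matrix. Suppose F_q^n = V₁ ⊕ ⋯ ⊕ V_l is a direct sum decomposition into nonzero subspaces such that every element g ∈ G maps each V_j bijectively onto some V_k, and let φ : G → Sym(l) be the induced permutation homomorphism on the index set of the blocks. Then all subspaces V₁, …, V_l have the same dimension, and φ(T_i) = 1 for every i such that rank(T_i − 1) < dim V₁. -/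
private lemma aux_vecMul_top (F : Type) [Field F] (n : ℕ) (W : Submodule F (Fin n → F))
    (hne : W ≠ ⊥) (hall : ∀ (M : Matrix (Fin n) (Fin n) F), ∀ w ∈ W, Matrix.vecMul w M ∈ W) :
    W = ⊤ := by
  obtain ⟨w, hwW, hw0⟩ := Submodule.exists_mem_ne_zero_of_ne_bot hne
  obtain ⟨s, hs⟩ : ∃ s, w s ≠ 0 := by
    by_contra h; push_neg at h; exact hw0 (funext h)
  rw [Submodule.eq_top_iff']
  intro x
  have : Matrix.vecMul w (fun t i => if t = s then (w s)⁻¹ * x i else 0) = x := by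
    funext i
    simp [Matrix.vecMul, dotProduct, Finset.sum_ite_eq', hs]
  exact this ▸ hall _ w hwW

/-- Let `T₁, …, T_r ∈ GL_n(F_q)` generate an absolutely irreducible
subgroup `G` (the `F_q`-subalgebra generated by `G` is all of `M_n(F_q)`) with scalar
product `T₁⋯T_r`.  If `F_q^n = V₁ ⊕ ⋯ ⊕ V_l` is a `G`-invariant decomposition into nonzero
subspaces with induced permutation map `φ : G → Sym(l)`, then all blocks `V_j` have the
same dimension and `φ(T_i) = 1` whenever `rank(T_i − 1) < dim V₁`. -/
theorem block_permutation_of_imprimitivity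
    (F : Type) [Field F] [Fintype F] (q : ℕ) (hcard : Fintype.card F = q)
    (n r l : ℕ) (hn : 1 ≤ n) (hl : 0 < l)
    (T : Fin r → Matrix.GeneralLinearGroup (Fin n) F)
    (hscalar : ∃ c : F,
      (List.ofFn fun i => ((T i : Matrix (Fin n) (Fin n) F))).prod =
        c • (1 : Matrix (Fin n) (Fin n) F))
    (G : Subgroup (Matrix.GeneralLinearGroup (Fin n) F))
    (hG : G = Subgroup.closure (Set.range T))
    (habs : Algebra.adjoin F
      ((fun g : Matrix.GeneralLinearGroup (Fin n) F =>
        (g : Matrix (Fin n) (Fin n) F)) '' (G : Set (Matrix.GeneralLinearGroup (Fin n) F))) = ⊤)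
    (V : Fin l → Submodule F (Fin n → F))
    (hVne : ∀ j, V j ≠ ⊥)
    (hinternal : DirectSum.IsInternal V)
    (φ : ↥G → Equiv.Perm (Fin l))
    (hφ : ∀ (g : ↥G) (j : Fin l),
      Submodule.map
        (Matrix.vecMulLinear ((g : Matrix.GeneralLinearGroup (Fin n) F) :
          Matrix (Fin n) (Fin n) F)) (V j) = V (φ g j)) :
    (∀ j k, Module.finrank F (V j) = Module.finrank F (V k)) ∧
    ∀ (i : Fin r) (g : ↥G), (g : Matrix.GeneralLinearGroup (Fin n) F) = T i →
      Matrix.rank ((T i : Matrix (Fin n) (Fin n) F) - 1) < Module.finrank F (V ⟨0, hl⟩) →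
      φ g = 1 := by
  classical
  set A : ↥G → Matrix (Fin n) (Fin n) F :=
    fun g => ((g : Matrix.GeneralLinearGroup (Fin n) F) : Matrix (Fin n) (Fin n) F) with hA
  have hind := hinternal.submodule_iSupIndep
  have hVinj : ∀ {j k : Fin l}, V j = V k → j = k := by
    intro j k h
    by_contra hjk
    have hdisj : Disjoint (V j) (V k) := hind.pairwiseDisjoint hjk
    rw [h, disjoint_self] at hdisj
    exact hVne k hdisj
  have hAmul : ∀ g h : ↥G, A (g * h) = A g * A h := by
    intro g h; simp [hA]
  have hmul : ∀ (g h : ↥G) (j : Fin l), φ (g * h) j = φ h (φ g j) := by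
    intro g h j
    apply hVinj
    rw [← hφ (g * h) j, ← hφ h (φ g j), ← hφ g j, ← Submodule.map_comp]
    congr 1
    apply LinearMap.ext
    intro v
    simp [hAmul, Matrix.vecMul_vecMul]
  have hone : ∀ j, φ 1 j = j := by
    intro j
    apply hVinj
    rw [← hφ 1 j]
    have : A 1 = 1 := by simp [hA]
    rw [show Matrix.vecMulLinear (A 1) = LinearMap.id by
      apply LinearMap.ext; intro v; simp [this, Matrix.vecMul_one]]
    exact Submodule.map_id (V j)
  -- transitivity
  have htrans : ∀ j k : Fin l, ∃ g : ↥G, φ g j = k := by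
    intro j k
    by_contra hcon
    push_neg at hcon
    set S : Set (Fin l) := {m | ∃ g : ↥G, φ g j = m} with hS
    set W : Submodule F (Fin n → F) := ⨆ m ∈ S, V m with hW
    have hWinv : ∀ (g : ↥G), ∀ w ∈ W, Matrix.vecMul w (A g) ∈ W := by
      intro g w hw
      have hle : Submodule.map (Matrix.vecMulLinear (A g)) W ≤ W := by
        rw [hW, Submodule.map_iSup]
        apply iSup_le
        intro m
        rw [Submodule.map_iSup]
        apply iSup_le
        intro hm
        rw [hφ g m]
        exact le_iSup₂ (f := fun m _ => V m) (φ g m)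
          (by obtain ⟨g', hg'⟩ := hm; exact ⟨g' * g, by rw [hmul, hg']⟩)
      exact hle ⟨w, hw, rfl⟩
    have hWall : ∀ (M : Matrix (Fin n) (Fin n) F), ∀ w ∈ W, Matrix.vecMul w M ∈ W := by
      intro M
      have hM : M ∈ Algebra.adjoin F
          ((fun g : Matrix.GeneralLinearGroup (Fin n) F =>
            (g : Matrix (Fin n) (Fin n) F)) '' (G : Set _)) := by
        rw [habs]; trivial
      refine Algebra.adjoin_induction ?_ ?_ ?_ ?_ hM
      · rintro x ⟨g, hgG, rfl⟩
        exact hWinv ⟨g, hgG⟩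
      · intro c w hw
        have : Matrix.vecMul w (algebraMap F (Matrix (Fin n) (Fin n) F) c) = c • w := by
          funext i
          simp [Algebra.algebraMap_eq_smul_one, Matrix.vecMul, dotProduct,
            Matrix.one_apply, mul_ite, Finset.sum_ite_eq', mul_comm]
        rw [this]
        exact W.smul_mem c hw
      · intro x y hx hy px py w hw
        rw [Matrix.vecMul_add]
        exact W.add_mem (px w hw) (py w hw)
      · intro x y hx hy px py w hw
        rw [← Matrix.vecMul_vecMul]
        exact py _ (px w hw)
    have hjW : V j ≤ W := le_iSup₂ (f := fun m _ => V m) j ⟨1, hone j⟩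
    have hWne : W ≠ ⊥ := by
      intro h
      exact hVne j (le_bot_iff.mp (h ▸ hjW))
    have hWtop : W = ⊤ := aux_vecMul_top F n W hWne hWall
    have hkS : k ∉ S := fun ⟨g, hg⟩ => hcon g hg
    have hle : W ≤ ⨆ m, ⨆ (_ : m ≠ k), V m := by
      rw [hW]
      apply iSup₂_le
      intro m hm
      exact le_iSup₂ (f := fun m (_ : m ≠ k) => V m) m (fun h => hkS (h ▸ hm))
    have hdisj : Disjoint (V k) (⨆ m, ⨆ (_ : m ≠ k), V m) := hind k
    have : V k = ⊥ := hdisj.eq_bot_of_le (le_trans (le_trans le_top hWtop.ge) hle)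
    exact hVne k this
  have hdim : ∀ j k, Module.finrank F (V j) = Module.finrank F (V k) := by
    intro j k
    obtain ⟨g, hg⟩ := htrans j k
    have hAinv : A g * A g⁻¹ = 1 := by
      rw [← hAmul, mul_inv_cancel]
      simp [hA]
    have hinj : Function.Injective (Matrix.vecMulLinear (A g)) := by
      intro v u h
      have := congrArg (fun x => Matrix.vecMul x (A g⁻¹)) h
      simpa [Matrix.vecMul_vecMul, hAinv, Matrix.vecMul_one] using this
    calc Module.finrank F (V j)
        = Module.finrank F (Submodule.map (Matrix.vecMulLinear (A g)) (V j)) :=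
          (Submodule.equivMapOfInjective _ hinj (V j)).finrank_eq
      _ = Module.finrank F (V k) := by rw [hφ g j, hg]
  refine ⟨hdim, ?_⟩
  intro i g hg hrank
  set M : Matrix (Fin n) (Fin n) F := ((T i : Matrix.GeneralLinearGroup (Fin n) F) :
    Matrix (Fin n) (Fin n) F) with hM
  have hgM : A g = M := congrArg Units.val hg
  apply Equiv.ext
  intro j
  simp only [Equiv.Perm.one_apply]
  by_contra hne
  have hdisj : Disjoint (V j) (V (φ g j)) := hind.pairwiseDisjoint (fun h => hne h.symm)
  have hinj : Function.Injective ((M - 1).vecMulLinear.comp (V j).subtype) := by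
    rw [← LinearMap.ker_eq_bot, eq_bot_iff]
    rintro ⟨x, hxj⟩ hx
    simp only [LinearMap.mem_ker, LinearMap.comp_apply, Submodule.subtype_apply,
      Matrix.vecMulLinear_apply] at hx
    have hxM : Matrix.vecMul x M = x := by
      rwa [Matrix.vecMul_sub, Matrix.vecMul_one, sub_eq_zero] at hx
    have hx1 : x ∈ V (φ g j) := by
      rw [← hφ g j]
      refine ⟨x, hxj, ?_⟩
      show Matrix.vecMul x (A g) = x
      rw [hgM, hxM]
    have hx0 : x = 0 := Submodule.disjoint_def.mp hdisj x hxj hx1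
    simp [hx0]
  have e2 : LinearMap.range ((M - 1).vecMulLinear.comp (V j).subtype)
      ≤ LinearMap.range (M - 1).vecMulLinear :=
    LinearMap.range_comp_le_range _ _
  have e3 : Module.finrank F (LinearMap.range (M - 1).vecMulLinear) = Matrix.rank (M - 1) := by
    rw [← Matrix.rank_transpose (M - 1), Matrix.rank, Matrix.mulVecLin_transpose]
  have h1 : Module.finrank F (V j) ≤ Matrix.rank (M - 1) := by
    rw [← e3]
    calc Module.finrank F (V j)
        = Module.finrank F (LinearMap.range ((M - 1).vecMulLinear.comp (V j).subtype)) :=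
          (LinearMap.finrank_range_of_inj hinj).symm
      _ ≤ Module.finrank F (LinearMap.range (M - 1).vecMulLinear) := Submodule.finrank_mono e2
  have h2 : Module.finrank F (V (⟨0, hl⟩ : Fin l)) = Module.finrank F (V j) := hdim _ _
  omega
end

section
/- Let ℓ be a prime with ℓ ≠ 2, and let Ā₁, Ā₂, Ā₃, Ā₄ ∈ GL₂(F_ℓ) be the reductions modulo ℓ of the integer matrices A₁ = [[-3,-8],[2,5]], A₂ = [[1,-4],[0,1]], A₃ = [[1,0],[2,1]], A₄ = [[-3,-4],[4,5]]. Then the representation of the group generated by Ā₁, Ā₂, Ā₃, Ā₄ on F_ℓ² is absolutely irreducible; equivalently, the F_ℓ-subalgebra of the 2×2 matrix algebra M₂(F_ℓ) generated by Ā₁, Ā₂, Ā₃, Ā₄ is all of M₂(F_ℓ). -/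
/-- The integer matrix `A₁`. -/
def A₁ : Matrix (Fin 2) (Fin 2) ℤ := !![-3, -8; 2, 5]
/-- The integer matrix `A₂`. -/
def A₂ : Matrix (Fin 2) (Fin 2) ℤ := !![1, -4; 0, 1]
/-- The integer matrix `A₃`. -/
def A₃ : Matrix (Fin 2) (Fin 2) ℤ := !![1, 0; 2, 1]
/-- The integer matrix `A₄`. -/
def A₄ : Matrix (Fin 2) (Fin 2) ℤ := !![-3, -4; 4, 5]

/-- For every prime `ℓ ≠ 2`, the reductions mod `ℓ` of the matrices
`A₁, A₂, A₃, A₄` act absolutely irreducibly on `F_ℓ²`; equivalently, the `F_ℓ`-subalgebra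
of `M₂(F_ℓ)` they generate is the whole matrix algebra. -/
theorem reductions_absolutely_irreducible
    (ℓ : ℕ) [Fact (Nat.Prime ℓ)] (hodd : ℓ ≠ 2) :
    Algebra.adjoin (ZMod ℓ)
      ({A₁.map (Int.cast : ℤ → ZMod ℓ), A₂.map (Int.cast : ℤ → ZMod ℓ),
        A₃.map (Int.cast : ℤ → ZMod ℓ), A₄.map (Int.cast : ℤ → ZMod ℓ)} :
        Set (Matrix (Fin 2) (Fin 2) (ZMod ℓ))) = ⊤ := by
  set S := Algebra.adjoin (ZMod ℓ)
      ({A₁.map (Int.cast : ℤ → ZMod ℓ), A₂.map (Int.cast : ℤ → ZMod ℓ),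
        A₃.map (Int.cast : ℤ → ZMod ℓ), A₄.map (Int.cast : ℤ → ZMod ℓ)} :
        Set (Matrix (Fin 2) (Fin 2) (ZMod ℓ))) with hS
  have hℓ : Nat.Prime ℓ := Fact.out
  have h2 : (2 : ZMod ℓ) ≠ 0 := by
    have : ((2 : ℕ) : ZMod ℓ) ≠ 0 := by
      rw [Ne, ZMod.natCast_eq_zero_iff]
      intro h
      have hle := Nat.le_of_dvd (by norm_num) h
      have hgt := hℓ.one_lt
      omega
    simpa using this
  have h4 : (4 : ZMod ℓ) ≠ 0 := by
    have : (4 : ZMod ℓ) = 2 * 2 := by norm_num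
    rw [this]
    exact mul_ne_zero h2 h2
  have ha : A₂.map (Int.cast : ℤ → ZMod ℓ) ∈ S := Algebra.subset_adjoin (by simp)
  have hb : A₃.map (Int.cast : ℤ → ZMod ℓ) ∈ S := Algebra.subset_adjoin (by simp)
  have he01 : (!![0, 1; 0, 0] : Matrix (Fin 2) (Fin 2) (ZMod ℓ)) ∈ S := by
    have : (!![0, 1; 0, 0] : Matrix (Fin 2) (Fin 2) (ZMod ℓ)) =
        (4 : ZMod ℓ)⁻¹ • (1 - A₂.map (Int.cast : ℤ → ZMod ℓ)) := by
      ext i j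
      fin_cases i <;> fin_cases j <;>
        simp [A₂, Matrix.map_apply, Matrix.one_apply, inv_mul_cancel₀ h4]
    rw [this]
    exact S.smul_mem (S.sub_mem S.one_mem ha) _
  have he10 : (!![0, 0; 1, 0] : Matrix (Fin 2) (Fin 2) (ZMod ℓ)) ∈ S := by
    have : (!![0, 0; 1, 0] : Matrix (Fin 2) (Fin 2) (ZMod ℓ)) =
        (2 : ZMod ℓ)⁻¹ • (A₃.map (Int.cast : ℤ → ZMod ℓ) - 1) := by
      ext i j
      fin_cases i <;> fin_cases j <;>
        simp [A₃, Matrix.map_apply, Matrix.one_apply, inv_mul_cancel₀ h2]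
    rw [this]
    exact S.smul_mem (S.sub_mem hb S.one_mem) _
  have he00 : (!![1, 0; 0, 0] : Matrix (Fin 2) (Fin 2) (ZMod ℓ)) ∈ S := by
    have : (!![1, 0; 0, 0] : Matrix (Fin 2) (Fin 2) (ZMod ℓ)) =
        !![0, 1; 0, 0] * !![0, 0; 1, 0] := by
      ext i j; fin_cases i <;> fin_cases j <;> simp [Matrix.mul_apply, Fin.sum_univ_two]
    rw [this]; exact S.mul_mem he01 he10
  have he11 : (!![0, 0; 0, 1] : Matrix (Fin 2) (Fin 2) (ZMod ℓ)) ∈ S := by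
    have : (!![0, 0; 0, 1] : Matrix (Fin 2) (Fin 2) (ZMod ℓ)) =
        !![0, 0; 1, 0] * !![0, 1; 0, 0] := by
      ext i j; fin_cases i <;> fin_cases j <;> simp [Matrix.mul_apply, Fin.sum_univ_two]
    rw [this]; exact S.mul_mem he10 he01
  rw [eq_top_iff]
  rintro M -
  have hM : M = M 0 0 • !![1, 0; 0, 0] + M 0 1 • !![0, 1; 0, 0]
      + M 1 0 • !![0, 0; 1, 0] + M 1 1 • !![0, 0; 0, 1] := by
    ext i j; fin_cases i <;> fin_cases j <;> simp
  rw [hM]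
  exact S.add_mem (S.add_mem (S.add_mem (S.smul_mem he00 _) (S.smul_mem he01 _))
    (S.smul_mem he10 _)) (S.smul_mem he11 _)
end

section
/- Let ℓ be an odd prime such that 2 is a quadratic non-residue modulo ℓ (equivalently ℓ ≡ 3 or 5 (mod 8)), and let M̄₁, M̄₂ ∈ GL₃(F_ℓ) be the reductions modulo ℓ of the integer matrices M₁ and M₂. Then (M̄₁·M̄₂)^{ℓ+1} is the identity matrix, while (M̄₁·M̄₂)^{(ℓ+1)/2} is not the identity matrix. -/
/-- The integer matrix `M₁`. -/
def M₁ : Matrix (Fin 3) (Fin 3) ℤ := !![-1, -4, 4; 0, 1, 0; 0, 0, 1]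
/-- The integer matrix `M₂`. -/
def M₂ : Matrix (Fin 3) (Fin 3) ℤ := !![1, 0, 0; -2, -1, 2; 0, 0, 1]

/-! ### Auxiliary matrices -/

/-- Conjugating matrix over `ℤ`. -/
def Tz : Matrix (Fin 3) (Fin 3) ℤ := !![-1, -2, 0; 0, 1, 1; 0, 0, 1]
/-- Inverse of `Tz`. -/
def Tz' : Matrix (Fin 3) (Fin 3) ℤ := !![-1, -2, 2; 0, 1, -1; 0, 0, 1]
/-- Normal form of `M₁ * M₂` over `ℤ`. -/
def Az : Matrix (Fin 3) (Fin 3) ℤ := !![3, 4, 0; 2, 3, 0; 0, 0, 1]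

/-- "Square root of 2" matrix mod ℓ. -/
def Jm (ℓ : ℕ) : Matrix (Fin 3) (Fin 3) (ZMod ℓ) := !![0, 2, 0; 1, 0, 0; 0, 0, 0]
/-- The matrix `diag(-1,-1,1)` mod ℓ. -/
def Em (ℓ : ℕ) : Matrix (Fin 3) (Fin 3) (ZMod ℓ) := !![-1, 0, 0; 0, -1, 0; 0, 0, 1]
/-- Normal form mod ℓ. -/
def Am (ℓ : ℕ) : Matrix (Fin 3) (Fin 3) (ZMod ℓ) := !![3, 4, 0; 2, 3, 0; 0, 0, 1]

lemma Tz_mul_Tz' : Tz * Tz' = 1 := by decide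
lemma Tz'_mul_Tz : Tz' * Tz = 1 := by decide
lemma M₁_mul_M₂ : M₁ * M₂ = Tz * Az * Tz' := by decide

lemma Jm_cube (ℓ : ℕ) : Jm ℓ * (Jm ℓ * Jm ℓ) = (2 : ZMod ℓ) • Jm ℓ := by
  ext i j
  fin_cases i <;> fin_cases j <;>
    simp [Jm, Matrix.mul_apply, Fin.sum_univ_three, Matrix.vecHead, Matrix.vecTail]

lemma Jm_pow_odd (ℓ : ℕ) (k : ℕ) : Jm ℓ ^ (2 * k + 1) = (2 : ZMod ℓ) ^ k • Jm ℓ := by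
  induction k with
  | zero => simp
  | succ n ih =>
    have h : 2 * (n + 1) + 1 = (2 * n + 1) + 2 := by ring
    rw [h, pow_add, ih, sq, smul_mul_assoc, Jm_cube, smul_smul, ← pow_succ]

lemma one_sub_mul_one_add (ℓ : ℕ) : (1 - Jm ℓ) * (1 + Jm ℓ) = Em ℓ := by
  have h : (1 - Jm ℓ) * (1 + Jm ℓ) = 1 - Jm ℓ * Jm ℓ := by noncomm_ring
  rw [h]
  ext i j
  fin_cases i <;> fin_cases j <;>
    simp [Jm, Em, Matrix.mul_apply, Fin.sum_univ_three, Matrix.one_apply,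
      Matrix.vecHead, Matrix.vecTail] <;> norm_num

lemma one_add_sq (ℓ : ℕ) : (1 + Jm ℓ) ^ 2 = Am ℓ := by
  rw [sq]
  ext i j
  fin_cases i <;> fin_cases j <;>
    simp [Jm, Am, Matrix.mul_apply, Fin.sum_univ_three, Matrix.one_apply,
      Matrix.vecHead, Matrix.vecTail] <;> norm_num

lemma Em_sq (ℓ : ℕ) : Em ℓ * Em ℓ = 1 := by
  ext i j
  fin_cases i <;> fin_cases j <;>
    simp [Em, Matrix.mul_apply, Fin.sum_univ_three, Matrix.one_apply,
      Matrix.vecHead, Matrix.vecTail]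

lemma Az_map (ℓ : ℕ) : Az.map (Int.cast : ℤ → ZMod ℓ) = Am ℓ := by
  ext i j
  fin_cases i <;> fin_cases j <;> simp [Az, Am, Matrix.map_apply] <;> norm_num

lemma two_pow_half (ℓ : ℕ) (hℓ : Nat.Prime ℓ) (hodd : ℓ ≠ 2)
    (h2 : ¬ IsSquare (2 : ZMod ℓ)) : (2 : ZMod ℓ) ^ (ℓ / 2) = -1 := by
  haveI : Fact (Nat.Prime ℓ) := ⟨hℓ⟩
  have h2ne : (2 : ZMod ℓ) ≠ 0 := by
    intro h
    have h' : (↑(2 : ℕ) : ZMod ℓ) = 0 := by exact_mod_cast h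
    exact hodd ((Nat.prime_dvd_prime_iff_eq hℓ Nat.prime_two).mp
      ((ZMod.natCast_eq_zero_iff 2 ℓ).mp h'))
  have hne1 : (2 : ZMod ℓ) ^ (ℓ / 2) ≠ 1 := fun h => h2 ((ZMod.euler_criterion ℓ h2ne).mpr h)
  obtain ⟨k, hk⟩ := hℓ.odd_of_ne_two hodd
  have hsum : ℓ / 2 + ℓ / 2 = ℓ - 1 := by omega
  have hsq : (2 : ZMod ℓ) ^ (ℓ / 2) * (2 : ZMod ℓ) ^ (ℓ / 2) = 1 := by
    rw [← pow_add, hsum, ZMod.pow_card_sub_one_eq_one h2ne]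
  rcases mul_self_eq_one_iff.mp hsq with h | h
  · exact absurd h hne1
  · exact h

/-- For an odd prime `ℓ` such that `2` is a quadratic non-residue mod `ℓ`,
the product of the reductions `M̄₁·M̄₂` has `(M̄₁M̄₂)^{ℓ+1} = 1` but
`(M̄₁M̄₂)^{(ℓ+1)/2} ≠ 1`. -/
theorem product_has_order_dividing_ell_plus_one
    (ℓ : ℕ) (hℓ : Nat.Prime ℓ) (hodd : ℓ ≠ 2) (h2 : ¬ IsSquare (2 : ZMod ℓ)) :
    ((M₁.map (Int.cast : ℤ → ZMod ℓ)) * (M₂.map (Int.cast : ℤ → ZMod ℓ))) ^ (ℓ + 1) = 1 ∧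
    ((M₁.map (Int.cast : ℤ → ZMod ℓ)) * (M₂.map (Int.cast : ℤ → ZMod ℓ))) ^ ((ℓ + 1) / 2) ≠ 1 := by
  haveI : Fact (Nat.Prime ℓ) := ⟨hℓ⟩
  obtain ⟨k, hk⟩ := hℓ.odd_of_ne_two hodd
  -- J ^ ℓ = -J
  have hJl : Jm ℓ ^ ℓ = -(Jm ℓ) := by
    have hk2 : ℓ / 2 = k := by omega
    have hpow := Jm_pow_odd ℓ k
    rw [← hk, ← hk2, two_pow_half ℓ hℓ hodd h2, neg_one_smul] at hpow
    exact hpow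
  -- Frobenius: (1 + J)^ℓ = 1 - J
  have hNl : (1 + Jm ℓ) ^ ℓ = 1 - Jm ℓ := by
    rw [add_pow_char_of_commute _ (Commute.one_left (Jm ℓ)), one_pow, hJl, sub_eq_add_neg]
  have hNl1 : (1 + Jm ℓ) ^ (ℓ + 1) = Em ℓ := by
    rw [pow_succ, hNl, one_sub_mul_one_add]
  -- powers of the normal form
  have hhalf : 2 * ((ℓ + 1) / 2) = ℓ + 1 := by omega
  have e1 : Am ℓ ^ ((ℓ + 1) / 2) = Em ℓ := by
    rw [← one_add_sq, ← pow_mul, hhalf, hNl1]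
  have e2 : Am ℓ ^ (ℓ + 1) = 1 := by
    have h : ℓ + 1 = (ℓ + 1) / 2 + (ℓ + 1) / 2 := by omega
    rw [h, pow_add, e1, Em_sq]
  have hEne : Em ℓ ≠ 1 := by
    intro h
    have h00 := congrFun (congrFun h 0) 0
    simp [Em, Matrix.one_apply] at h00
    -- h00 : (-1 : ZMod ℓ) = 1
    have h2z : (2 : ZMod ℓ) = 0 := by linear_combination -h00
    have h2z' : (↑(2 : ℕ) : ZMod ℓ) = 0 := by exact_mod_cast h2z
    exact hodd ((Nat.prime_dvd_prime_iff_eq hℓ Nat.prime_two).mp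
      ((ZMod.natCast_eq_zero_iff 2 ℓ).mp h2z'))
  -- transfer via conjugation
  set c : ℤ →+* ZMod ℓ := Int.castRingHom (ZMod ℓ) with hc
  have hmapfun : (Int.cast : ℤ → ZMod ℓ) = ⇑c := rfl
  set Tm : Matrix (Fin 3) (Fin 3) (ZMod ℓ) := Tz.map c with hTm
  set Tm' : Matrix (Fin 3) (Fin 3) (ZMod ℓ) := Tz'.map c with hTm'
  have hTT' : Tm * Tm' = 1 := by
    rw [hTm, hTm', ← Matrix.map_mul, Tz_mul_Tz', Matrix.map_one c c.map_zero c.map_one]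
  have hT'T : Tm' * Tm = 1 := by
    rw [hTm, hTm', ← Matrix.map_mul, Tz'_mul_Tz, Matrix.map_one c c.map_zero c.map_one]
  have hmain : (M₁.map (Int.cast : ℤ → ZMod ℓ)) * (M₂.map (Int.cast : ℤ → ZMod ℓ)) =
      Tm * Am ℓ * Tm' := by
    rw [hmapfun, ← Matrix.map_mul, M₁_mul_M₂, Matrix.map_mul, Matrix.map_mul, ← hTm, ← hTm']
    rw [show Az.map ⇑c = Am ℓ from Az_map ℓ]
  have hconj : ∀ n : ℕ, (Tm * Am ℓ * Tm') ^ n = Tm * Am ℓ ^ n * Tm' := by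
    intro n
    induction n with
    | zero => simp [hTT']
    | succ n ih =>
      rw [pow_succ, ih, pow_succ]
      simp only [Matrix.mul_assoc]
      rw [show Tm' * (Tm * (Am ℓ * Tm')) = Am ℓ * Tm' by
        rw [← Matrix.mul_assoc Tm' Tm, hT'T, Matrix.one_mul]]
  constructor
  · rw [hmain, hconj, e2, Matrix.mul_one, hTT']
  · rw [hmain, hconj, e1]
    intro h
    apply hEne
    calc Em ℓ = (Tm' * Tm) * Em ℓ * (Tm' * Tm) := by
          rw [hT'T, Matrix.one_mul, Matrix.mul_one]
      _ = Tm' * (Tm * Em ℓ * Tm') * Tm := by simp only [Matrix.mul_assoc]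
      _ = 1 := by rw [h, Matrix.mul_one, hT'T]
end
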